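/- Let z_n(r) = -1 + 2·exp(-r²/(2n)) for an integer n ≥ 2, and let W(x,y) be the stereographic coordinate W = (φ₁+iφ₂)/(1+φ₃) of the hedgehog field φ(r,θ) = (√(1-z_n²)cos nθ, √(1-z_n²)sin nθ, z_n(r)). Then the partial derivative W_x along the line x = 0 satisfies W_x(0,y) = √(n/2)·(i·sgn(y))^{n-1} + O(y²), which has a jump discontinuity at y = 0; hence the radially symmetric degree-n field is not continuously differentiable at the origin. -/

import Mathlib

open Real Complex

/-- The degree-`n` hedgehog profile `z_n(r) = -1 + 2 e^{-r²/(2n)}`. -/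
noncomputable def zn (n : ℕ) (r : ℝ) : ℝ := -1 + 2 * Real.exp (-r ^ 2 / (2 * n))

/-- The radially symmetric degree-`n` hedgehog field in Cartesian coordinates. -/
noncomputable def hedgehog (n : ℕ) (p : ℝ × ℝ) : ℝ × ℝ × ℝ :=
  (Real.sqrt (1 - zn n (Real.sqrt (p.1 ^ 2 + p.2 ^ 2)) ^ 2) *
      Real.cos (n * Complex.arg (p.1 + p.2 * Complex.I)),
   Real.sqrt (1 - zn n (Real.sqrt (p.1 ^ 2 + p.2 ^ 2)) ^ 2) *
      Real.sin (n * Complex.arg (p.1 + p.2 * Complex.I)),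
   zn n (Real.sqrt (p.1 ^ 2 + p.2 ^ 2)))

/-- The stereographic coordinate `W = (φ₁ + iφ₂)/(1 + φ₃)` of the hedgehog field. -/
noncomputable def Wcoord (n : ℕ) (p : ℝ × ℝ) : ℂ :=
  (((hedgehog n p).1 : ℂ) + ((hedgehog n p).2.1 : ℂ) * Complex.I) /
    (1 + ((hedgehog n p).2.2 : ℂ))

open Topology Filter

lemma exp_aux (s : ℝ) (hs : 0 ≤ s) :
    Real.sqrt (1 - (-1 + 2 * Real.exp (-s)) ^ 2) =
      Real.sqrt (Real.exp s - 1) * (2 * Real.exp (-s)) := by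
  have h1 : (1:ℝ) ≤ Real.exp s := Real.one_le_exp hs
  have h2 : Real.exp (-s) * Real.exp s = 1 := by rw [← Real.exp_add]; simp
  have h3 : Real.sqrt (Real.exp s - 1) ^ 2 = Real.exp s - 1 :=
    Real.sq_sqrt (by linarith)
  have key : 1 - (-1 + 2 * Real.exp (-s)) ^ 2
      = (Real.sqrt (Real.exp s - 1) * (2 * Real.exp (-s))) ^ 2 := by
    nlinarith [h3, h2, Real.exp_pos (-s)]
  rw [key, Real.sqrt_sq (by positivity)]

lemma Wcoord_eq (n : ℕ) (x y : ℝ) (h : (x:ℂ) + (y:ℂ) * I ≠ 0) :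
    Wcoord n (x, y) = ((Real.sqrt (Real.exp ((x^2+y^2)/(2*(n:ℝ))) - 1) : ℝ) : ℂ) *
      ((((x:ℂ) + (y:ℂ) * I)) / ((‖(x:ℂ) + (y:ℂ) * I‖ : ℝ) : ℂ)) ^ n := by
  have habs0 : ‖(x:ℂ) + (y:ℂ) * I‖ ≠ 0 := norm_ne_zero_iff.mpr h
  have habs : ((‖(x:ℂ) + (y:ℂ) * I‖ : ℝ) : ℂ) ≠ 0 := by
    exact_mod_cast habs0
  set w : ℂ := (x:ℂ) + (y:ℂ) * I with hw
  set θ : ℝ := Complex.arg w with hθ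
  have hr2 : Real.sqrt (x^2+y^2) ^ 2 = x^2 + y^2 := Real.sq_sqrt (by positivity)
  set s : ℝ := (x^2+y^2)/(2*(n:ℝ)) with hs
  have hs0 : 0 ≤ s := by positivity
  have hz : zn n (Real.sqrt (x^2+y^2)) = -1 + 2 * Real.exp (-s) := by
    rw [zn, hr2, hs, neg_div]
  have hexpn : Complex.exp (((n:ℝ) * θ : ℝ) * I) = (w / (‖w‖ : ℂ)) ^ n := by
    have h1 : Complex.exp ((θ:ℂ) * I) = w / (‖w‖ : ℂ) := by
      rw [eq_div_iff habs, mul_comm]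
      exact Complex.norm_mul_exp_arg_mul_I w
    rw [show (((n:ℝ) * θ : ℝ) : ℂ) * I = (n:ℕ) * ((θ:ℂ)*I) by push_cast; ring,
        Complex.exp_nat_mul, h1]
  have hcos : ((Real.cos ((n:ℝ)*θ) : ℝ):ℂ) + ((Real.sin ((n:ℝ)*θ):ℝ):ℂ) * I
      = (w / (‖w‖:ℂ))^n := by
    rw [← hexpn, Complex.exp_mul_I, Complex.ofReal_cos, Complex.ofReal_sin]
  have hd0 : Real.exp (-s) > 0 := Real.exp_pos _
  simp only [Wcoord, hedgehog, ← hw, ← hθ]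
  rw [hz, exp_aux s hs0, ← hcos]
  have : (1:ℂ) + ((-1 + 2 * Real.exp (-s) : ℝ) : ℂ) = ((2 * Real.exp (-s) : ℝ) : ℂ) := by
    push_cast; ring
  rw [this]
  have h2e : ((2 * Real.exp (-s) : ℝ) : ℂ) ≠ 0 := by
    exact_mod_cast (by positivity : (2 * Real.exp (-s) : ℝ) ≠ 0)
  field_simp
  push_cast
  ring

lemma sign_mul_abs' (y : ℝ) (hy : y ≠ 0) : Real.sign y * |y| = y := by
  rcases hy.lt_or_gt with h|h
  · rw [Real.sign_of_neg h, abs_of_neg h]; ring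
  · rw [Real.sign_of_pos h, abs_of_pos h]; ring

lemma hasDerivAt_W (n : ℕ) (hn : 1 ≤ n) (y : ℝ) (hy : y ≠ 0) :
    HasDerivAt (fun x : ℝ => Wcoord n (x, y))
      ((((n:ℝ) * Real.sqrt (Real.exp (y^2/(2*(n:ℝ))) - 1) / |y| : ℝ) : ℂ) *
        (Complex.I * (Real.sign y : ℂ)) ^ (n-1)) 0 := by
  have hy2 : (0:ℝ) < y^2 := by positivity
  have hn0 : (0:ℝ) < (n:ℝ) := by exact_mod_cast hn
  set g : ℝ → ℝ := fun x =>
    Real.sqrt (Real.exp ((x^2+y^2)/(2*(n:ℝ))) - 1) / Real.sqrt (x^2+y^2) ^ n with hg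
  have hfun : ∀ x : ℝ, Wcoord n (x, y) = ((g x : ℝ) : ℂ) * ((x:ℂ) + (y:ℂ)*I)^n := by
    intro x
    have him : ((x:ℂ) + (y:ℂ)*I).im = y := by simp
    have hw : (x:ℂ) + (y:ℂ)*I ≠ 0 := by
      intro h0; rw [h0] at him; exact hy (by simpa using him.symm)
    have hxy2 : (0:ℝ) < x^2 + y^2 := by positivity
    have hsq : Real.sqrt (x^2+y^2) ≠ 0 := by positivity
    rw [Wcoord_eq n x y hw, Complex.norm_add_mul_I, div_pow, hg]
    push_cast
    field_simp
  have hu : HasDerivAt (fun x : ℝ => x^2 + y^2) 0 0 := by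
    simpa using ((hasDerivAt_pow 2 (0:ℝ)).add_const (y^2))
  have ha : HasDerivAt (fun x : ℝ => Real.exp ((x^2+y^2)/(2*(n:ℝ))) - 1) 0 0 := by
    have h1 : HasDerivAt (fun x : ℝ => (x^2+y^2)/(2*(n:ℝ))) 0 0 := by
      simpa using hu.div_const (2*(n:ℝ))
    simpa using (h1.exp.sub_const 1)
  have ha0 : (0:ℝ) < Real.exp ((0^2+y^2)/(2*(n:ℝ))) - 1 := by
    rw [sub_pos]
    refine Real.one_lt_exp_iff.mpr (div_pos (by simpa using hy2) (by linarith))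
  have hb : HasDerivAt (fun x : ℝ => Real.sqrt (Real.exp ((x^2+y^2)/(2*(n:ℝ))) - 1)) 0 0 := by
    simpa using ha.sqrt (ne_of_gt ha0)
  have hc : HasDerivAt (fun x : ℝ => Real.sqrt (x^2+y^2) ^ n) 0 0 := by
    have h1 : HasDerivAt (fun x : ℝ => Real.sqrt (x^2+y^2)) 0 0 := by
      simpa using hu.sqrt (by positivity : (0:ℝ)^2 + y^2 ≠ 0)
    simpa using h1.fun_pow n
  have hc0 : Real.sqrt ((0:ℝ)^2+y^2) ^ n ≠ 0 := by positivity
  have hgd : HasDerivAt g 0 0 := by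
    have := hb.fun_div hc hc0
    simpa using this
  have hgC : HasDerivAt (fun x : ℝ => ((g x : ℝ) : ℂ)) 0 0 := by
    simpa using hgd.ofReal_comp
  have hh : HasDerivAt (fun x : ℝ => ((x:ℂ) + (y:ℂ)*I)) 1 0 := by
    have h1 : HasDerivAt (fun x : ℝ => ((x:ℂ))) 1 0 := by
      simpa using (hasDerivAt_id (0:ℝ)).ofReal_comp
    simpa using h1.add_const ((y:ℂ)*I)
  have hhn : HasDerivAt (fun x : ℝ => ((x:ℂ) + (y:ℂ)*I)^n)
      ((n:ℂ) * ((0:ℂ) + (y:ℂ)*I)^(n-1)) 0 := by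
    have := HasDerivAt.scomp (x := (0:ℝ))
      (hasDerivAt_pow n (((0:ℝ):ℂ) + (y:ℂ)*I)) hh
    simpa [Function.comp_def] using this
  have final := (hgC.mul hhn).congr_of_eventuallyEq
    (Filter.Eventually.of_forall fun x => hfun x)
  have hyne : |y| ≠ 0 := by positivity
  have hpow : |y|^n = |y|^(n-1) * |y| := by
    conv_lhs => rw [show n = (n-1)+1 by omega]
    rw [pow_succ]
  have hsgn : (y:ℂ) * I = (Complex.I * (Real.sign y : ℂ)) * ((|y| : ℝ) : ℂ) := by
    rw [show ((y:ℝ):ℂ) = ((Real.sign y * |y| : ℝ) : ℂ) by rw [sign_mul_abs' y hy]]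
    push_cast
    ring
  have hreal : Real.sqrt (Real.exp (y^2/(2*(n:ℝ))) - 1) / |y|^n * n * |y|^(n-1)
      = (n:ℝ) * Real.sqrt (Real.exp (y^2/(2*(n:ℝ))) - 1) / |y| := by
    field_simp
    rw [hpow]
    ring
  refine final.congr_deriv (Eq.symm ?_)
  simp only [g, zero_mul, zero_add]
  rw [show ((0:ℝ)^2+y^2) = y^2 by ring, Real.sqrt_sq_eq_abs, ← hreal]
  rw [hsgn, mul_pow]
  push_cast
  ring

lemma bound_aux (n : ℕ) (hn : 2 ≤ n) (y : ℝ) (hy : y ≠ 0) (hy1 : |y| < 1) :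
    |(n:ℝ) * Real.sqrt (Real.exp (y^2/(2*(n:ℝ))) - 1) / |y| - Real.sqrt ((n:ℝ)/2)|
      ≤ Real.sqrt ((n:ℝ)/2) * y^2 := by
  have hn0 : (0:ℝ) < (n:ℝ) := by exact_mod_cast lt_of_lt_of_le two_pos hn
  have hn1 : (1:ℝ) ≤ (n:ℝ) := by exact_mod_cast le_trans one_le_two hn
  have hy0 : (0:ℝ) < |y| := abs_pos.mpr hy
  have hy2 : y^2 < 1 := by
    rw [← _root_.sq_abs]; exact pow_lt_one₀ (abs_nonneg y) hy1 two_ne_zero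
  set t : ℝ := y^2/(2*(n:ℝ)) with ht
  have ht0 : 0 < t := by positivity
  have hty : t ≤ y^2 := by
    apply div_le_self (by positivity); linarith
  have ht1 : t ≤ 1 := le_trans hty hy2.le
  have hlow : t ≤ Real.exp t - 1 := by linarith [Real.add_one_le_exp t]
  have hup : Real.exp t - 1 ≤ t*(1+t)^2 := by
    have h := Real.exp_bound' ht0.le ht1 (n:=2) (by norm_num)
    simp [Finset.sum_range_succ] at h
    nlinarith
  set B : ℝ := Real.sqrt ((n:ℝ)/2) with hB
  have hB0 : 0 < B := Real.sqrt_pos.mpr (by positivity)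
  have hnt : (n:ℝ) * Real.sqrt t = B * |y| := by
    rw [show (n:ℝ) * Real.sqrt t = Real.sqrt ((n:ℝ)^2 * t) by
          rw [Real.sqrt_mul (by positivity), Real.sqrt_sq hn0.le],
        show ((n:ℝ)^2 * t) = ((n:ℝ)/2) * y^2 by rw [ht]; field_simp,
        Real.sqrt_mul (by positivity), Real.sqrt_sq_eq_abs]
  set A : ℝ := (n:ℝ) * Real.sqrt (Real.exp t - 1) / |y| with hA
  have h1 : Real.sqrt t ≤ Real.sqrt (Real.exp t - 1) := Real.sqrt_le_sqrt hlow
  have hA_low : B ≤ A := by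
    rw [hA, le_div_iff₀ hy0]
    nlinarith
  have h2 : Real.sqrt (Real.exp t - 1) ≤ Real.sqrt t * (1+t) := by
    have := Real.sqrt_le_sqrt hup
    rwa [Real.sqrt_mul ht0.le, Real.sqrt_sq (by positivity)] at this
  have hA_up : A ≤ B * (1+t) := by
    rw [hA, div_le_iff₀ hy0]
    nlinarith
  rw [_root_.abs_of_nonneg (by linarith)]
  nlinarith

lemma hasDerivAt_W_x (n : ℕ) (hn : 1 ≤ n) (x : ℝ) (hx : 0 < x) :
    HasDerivAt (fun x' : ℝ => Wcoord n (x', 0))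
      (((Real.exp ((x^2+(0:ℝ)^2)/(2*(n:ℝ))) * (x/(n:ℝ)) /
          (2 * Real.sqrt (Real.exp ((x^2+(0:ℝ)^2)/(2*(n:ℝ))) - 1)) : ℝ) : ℂ)) x := by
  have hn0 : (0:ℝ) < (n:ℝ) := by exact_mod_cast hn
  have hs : HasDerivAt (fun x' : ℝ => (x'^2+(0:ℝ)^2)/(2*(n:ℝ))) (x/(n:ℝ)) x := by
    have h := ((hasDerivAt_pow 2 x).add_const ((0:ℝ)^2)).div_const (2*(n:ℝ))
    refine h.congr_deriv (Eq.symm ?_)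
    field_simp
    ring
  have ha0 : (0:ℝ) < Real.exp ((x^2+(0:ℝ)^2)/(2*(n:ℝ))) - 1 := by
    rw [sub_pos]
    refine Real.one_lt_exp_iff.mpr (div_pos (by positivity) (by linarith))
  have hsq := (hs.exp.sub_const 1).sqrt (ne_of_gt ha0)
  have hC := hsq.ofReal_comp
  refine hC.congr_of_eventuallyEq ?_
  filter_upwards [eventually_gt_nhds hx] with x' hx'
  have hx'0 : ((x':ℝ):ℂ) ≠ 0 := by exact_mod_cast ne_of_gt hx'
  have hw : (x':ℂ) + ((0:ℝ):ℂ)*I ≠ 0 := by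
    simpa using hx'0
  rw [Wcoord_eq n x' 0 hw]
  simp only [Complex.ofReal_zero, zero_mul, add_zero, Complex.norm_real, Real.norm_eq_abs,
    _root_.abs_of_pos hx']
  rw [div_self hx'0, one_pow, mul_one]

lemma xaxis_bound (n : ℕ) (hn : 2 ≤ n) (x : ℝ) (hx : 0 < x) (hx1 : x < 1) :
    Real.exp ((x^2+(0:ℝ)^2)/(2*(n:ℝ))) * (x/(n:ℝ)) /
        (2 * Real.sqrt (Real.exp ((x^2+(0:ℝ)^2)/(2*(n:ℝ))) - 1))
      ≤ 3 / (2 * Real.sqrt (2*(n:ℝ))) := by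
  have hn0 : (0:ℝ) < (n:ℝ) := by exact_mod_cast lt_of_lt_of_le two_pos hn
  have hn2 : (2:ℝ) ≤ (n:ℝ) := by exact_mod_cast hn
  set s : ℝ := (x^2+(0:ℝ)^2)/(2*(n:ℝ)) with hs
  have hsx : s = x^2/(2*(n:ℝ)) := by rw [hs]; ring_nf
  have hs0 : 0 < s := by rw [hsx]; positivity
  have hx2 : x^2 < 1 := by nlinarith
  have hs1 : s ≤ 1 := by
    rw [hsx]; apply le_trans (div_le_self (by positivity) (by linarith)); linarith
  have hsq : s ≤ 1/4 := by
    rw [hsx, div_le_iff₀ (by linarith)]; nlinarith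
  have he : Real.exp s ≤ 3/2 := by
    have h := Real.exp_bound' hs0.le hs1 (n:=2) (by norm_num)
    simp [Finset.sum_range_succ] at h
    nlinarith
  have h2n : (0:ℝ) < Real.sqrt (2*(n:ℝ)) := Real.sqrt_pos.mpr (by linarith)
  have hr : Real.sqrt (x^2/(2*(n:ℝ))) = x / Real.sqrt (2*(n:ℝ)) := by
    rw [Real.sqrt_div (sq_nonneg x), Real.sqrt_sq hx.le]
  have hlow : x / Real.sqrt (2*(n:ℝ)) ≤ Real.sqrt (Real.exp s - 1) := by
    rw [← hr, ← hsx]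
    exact Real.sqrt_le_sqrt (by linarith [Real.add_one_le_exp s])
  have hd0 : 0 < x / Real.sqrt (2*(n:ℝ)) := by positivity
  have hsqrt2n : Real.sqrt (2*(n:ℝ)) ^ 2 = 2*(n:ℝ) := Real.sq_sqrt (by linarith)
  calc Real.exp s * (x/(n:ℝ)) / (2 * Real.sqrt (Real.exp s - 1))
      ≤ (3/2) * (x/(n:ℝ)) / (2 * (x / Real.sqrt (2*(n:ℝ)))) := by
        apply div_le_div₀ (by positivity) ?_ (by linarith) (by linarith)
        have : 0 ≤ x/(n:ℝ) := by positivity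
        nlinarith
    _ = 3 / (2 * Real.sqrt (2*(n:ℝ))) := by
        rw [div_eq_div_iff (by positivity) (by positivity)]
        have hprod : Real.sqrt 2 * Real.sqrt (n:ℝ) * (Real.sqrt 2 * Real.sqrt (n:ℝ))
            = 2*(n:ℝ) := by
          nlinarith [Real.sq_sqrt (le_of_lt (two_pos (α := ℝ))), Real.sq_sqrt hn0.le]
        rw [Real.sqrt_mul (le_of_lt (two_pos (α := ℝ))) ((n:ℝ))]
        field_simp
        linear_combination hprod

/-- For `n ≥ 2`, `W_x(0,y) = √(n/2)·(i sgn y)^{n-1} + O(y²)`, which has a jump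
discontinuity across `y = 0`; hence the degree-`n` hedgehog field is not `C¹` at the
origin. -/
theorem stmt19 (n : ℕ) (hn : 2 ≤ n) :
    (∃ C > (0 : ℝ), ∃ δ > (0 : ℝ), ∀ y : ℝ, y ≠ 0 → |y| < δ →
      ‖deriv (fun x : ℝ => Wcoord n (x, y)) 0 -
        (Real.sqrt (n / 2) : ℂ) * (Complex.I * (Real.sign y : ℂ)) ^ (n - 1)‖ ≤ C * y ^ 2) ∧
    ¬ ContDiffAt ℝ 1 (hedgehog n) (0, 0) := by
  have hn1 : 1 ≤ n := le_trans one_le_two hn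
  have hn0 : (0:ℝ) < (n:ℝ) := by exact_mod_cast lt_of_lt_of_le two_pos hn
  constructor
  · refine ⟨Real.sqrt ((n:ℝ)/2), Real.sqrt_pos.mpr (by positivity), 1, one_pos, ?_⟩
    intro y hy hy1
    rw [(hasDerivAt_W n hn1 y hy).deriv]
    have hσ : ‖(Complex.I * ((Real.sign y : ℝ) : ℂ)) ^ (n-1)‖ = 1 := by
      rw [norm_pow, norm_mul, Complex.norm_I, one_mul, Complex.norm_real]
      rcases Real.sign_apply_eq_of_ne_zero y hy with h|h <;> rw [h] <;> norm_num
    rw [show (((n:ℝ) * Real.sqrt (Real.exp (y^2/(2*(n:ℝ))) - 1) / |y| : ℝ) : ℂ) *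
          (Complex.I * (Real.sign y : ℂ)) ^ (n-1) -
          (Real.sqrt ((n:ℝ)/2) : ℂ) * (Complex.I * (Real.sign y : ℂ)) ^ (n-1)
        = ((((n:ℝ) * Real.sqrt (Real.exp (y^2/(2*(n:ℝ))) - 1) / |y|
            - Real.sqrt ((n:ℝ)/2) : ℝ)) : ℂ) *
          (Complex.I * ((Real.sign y : ℝ) : ℂ)) ^ (n-1) by push_cast; ring]
    rw [norm_mul, hσ, mul_one, Complex.norm_real, Real.norm_eq_abs]
    exact bound_aux n hn y hy hy1
  · intro hC
    obtain ⟨u, hu, hcdu⟩ := hC.contDiffOn le_rfl (by simp)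
    obtain ⟨v, hvu, hvo, hv0⟩ := mem_nhds_iff.mp hu
    have hden : ∀ p : ℝ × ℝ, (1:ℂ) + (((hedgehog n p).2.2 : ℝ) : ℂ) ≠ 0 := by
      intro p
      have hpos : (0:ℝ) < 1 + zn n (Real.sqrt (p.1^2+p.2^2)) := by
        rw [zn]
        have := Real.exp_pos (-(Real.sqrt (p.1^2+p.2^2))^2/(2*(n:ℝ)))
        linarith
      have hcast : (1:ℂ) + (((hedgehog n p).2.2 : ℝ) : ℂ)
          = ((1 + (hedgehog n p).2.2 : ℝ) : ℂ) := by push_cast; ring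
      rw [hcast, Complex.ofReal_ne_zero]
      exact ne_of_gt hpos
    have hWcd : ContDiffOn ℝ 1 (Wcoord n) v := by
      have hcd : ContDiffOn ℝ 1 (hedgehog n) v := hcdu.mono hvu
      have h1 : ContDiffOn ℝ 1 (fun p : ℝ×ℝ => (((hedgehog n p).1 : ℝ) : ℂ)) v :=
        Complex.ofRealCLM.contDiff.comp_contDiffOn hcd.fst
      have h2 : ContDiffOn ℝ 1 (fun p : ℝ×ℝ => (((hedgehog n p).2.1 : ℝ) : ℂ)) v :=
        Complex.ofRealCLM.contDiff.comp_contDiffOn hcd.snd.fst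
      have h3 : ContDiffOn ℝ 1 (fun p : ℝ×ℝ => (((hedgehog n p).2.2 : ℝ) : ℂ)) v :=
        Complex.ofRealCLM.contDiff.comp_contDiffOn hcd.snd.snd
      have hdiv : ContDiffOn ℝ 1 (fun p : ℝ×ℝ =>
          ((((hedgehog n p).1 : ℝ) : ℂ) + (((hedgehog n p).2.1 : ℝ) : ℂ) * Complex.I) *
            ((1:ℂ) + (((hedgehog n p).2.2 : ℝ) : ℂ))⁻¹) v :=
        (h1.add (h2.mul contDiffOn_const)).mul
          ((contDiffOn_const.add h3).inv (fun p _ => hden p))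
      exact hdiv.congr (fun p _ => div_eq_mul_inv _ _)
    have hfc : ContinuousOn (fun p : ℝ×ℝ => fderiv ℝ (Wcoord n) p) v :=
      hWcd.continuousOn_fderiv_of_isOpen hvo le_rfl
    have hvmem : v ∈ 𝓝 (((0:ℝ),(0:ℝ)) : ℝ×ℝ) := hvo.mem_nhds hv0
    have hΦ : ContinuousAt (fun p : ℝ×ℝ => fderiv ℝ (Wcoord n) p ((1:ℝ),(0:ℝ)))
        ((0:ℝ),(0:ℝ)) := by
      have h1 : ContinuousAt (fun p : ℝ×ℝ => fderiv ℝ (Wcoord n) p) ((0:ℝ),(0:ℝ)) :=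
        hfc.continuousAt hvmem
      exact ((ContinuousLinearMap.apply ℝ ℂ (((1:ℝ),(0:ℝ)) : ℝ×ℝ)).continuous.continuousAt).comp h1
    have hkey : ∀ p : ℝ × ℝ, p ∈ v → ∀ c : ℂ,
        HasDerivAt (fun x : ℝ => Wcoord n (x, p.2)) c p.1 →
        fderiv ℝ (Wcoord n) p ((1:ℝ),(0:ℝ)) = c := by
      intro p hp c hc
      have hd : DifferentiableAt ℝ (Wcoord n) p :=
        (hWcd.contDiffAt (hvo.mem_nhds hp)).differentiableAt one_ne_zero
      have hline : HasDerivAt (fun x : ℝ => ((x, p.2) : ℝ×ℝ)) ((1:ℝ),(0:ℝ)) p.1 :=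
        (hasDerivAt_id p.1).prodMk (hasDerivAt_const p.1 p.2)
      exact (hd.hasFDerivAt.comp_hasDerivAt (l := Wcoord n) p.1 hline).unique hc
    set B : ℝ := Real.sqrt ((n:ℝ)/2) with hB
    set L : ℂ := fderiv ℝ (Wcoord n) ((0:ℝ),(0:ℝ)) ((1:ℝ),(0:ℝ)) with hL
    have hIoo : Set.Ioo (0:ℝ) 1 ∈ 𝓝[>] (0:ℝ) := Ioo_mem_nhdsGT_of_mem ⟨le_refl 0, one_pos⟩
    -- y-axis limit
    have hpath1 : Filter.Tendsto (fun y : ℝ => (((0:ℝ), y) : ℝ×ℝ)) (𝓝[>] 0)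
        (𝓝 ((0:ℝ),(0:ℝ))) := by
      have h1 : Filter.Tendsto (fun y : ℝ => (((0:ℝ), y) : ℝ×ℝ)) (𝓝 0)
          (𝓝 ((0:ℝ),(0:ℝ))) := (Continuous.tendsto (continuous_const.prodMk continuous_id) 0)
      exact h1.mono_left nhdsWithin_le_nhds
    have hT1 : Filter.Tendsto (fun y : ℝ => fderiv ℝ (Wcoord n) ((0:ℝ),y) ((1:ℝ),(0:ℝ)))
        (𝓝[>] 0) (𝓝 L) := hΦ.tendsto.comp hpath1
    have hmem1 : ∀ᶠ y in 𝓝[>] (0:ℝ), (((0:ℝ), y) : ℝ×ℝ) ∈ v := hpath1.eventually_mem hvmem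
    have hEv1 : (fun y : ℝ => fderiv ℝ (Wcoord n) ((0:ℝ),y) ((1:ℝ),(0:ℝ)))
        =ᶠ[𝓝[>] (0:ℝ)] (fun y : ℝ =>
          (((n:ℝ) * Real.sqrt (Real.exp (y^2/(2*(n:ℝ))) - 1) / |y| : ℝ) : ℂ)
            * Complex.I ^ (n-1)) := by
      filter_upwards [hmem1, hIoo] with y hyv hy01
      rw [hkey ((0:ℝ),y) hyv _ (hasDerivAt_W n hn1 y (ne_of_gt hy01.1))]
      rw [Real.sign_of_pos hy01.1]
      push_cast
      ring
    have hT1' : Filter.Tendsto (fun y : ℝ =>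
          (((n:ℝ) * Real.sqrt (Real.exp (y^2/(2*(n:ℝ))) - 1) / |y| : ℝ) : ℂ)
            * Complex.I ^ (n-1)) (𝓝[>] 0) (𝓝 L) := hT1.congr' hEv1
    have hT2 : Filter.Tendsto (fun y : ℝ =>
          (((n:ℝ) * Real.sqrt (Real.exp (y^2/(2*(n:ℝ))) - 1) / |y| : ℝ) : ℂ)
            * Complex.I ^ (n-1)) (𝓝[>] 0) (𝓝 ((B:ℂ) * Complex.I ^ (n-1))) := by
      rw [tendsto_iff_norm_sub_tendsto_zero]
      apply squeeze_zero' (g := fun y : ℝ => B * y^2)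
        (Filter.Eventually.of_forall fun y => norm_nonneg _) ?_ ?_
      · filter_upwards [hIoo] with y hy01
        have hb := bound_aux n hn y (ne_of_gt hy01.1)
          (by rw [_root_.abs_of_pos hy01.1]; exact hy01.2)
        rw [show (((n:ℝ) * Real.sqrt (Real.exp (y^2/(2*(n:ℝ))) - 1) / |y| : ℝ) : ℂ)
              * Complex.I ^ (n-1) - (B:ℂ) * Complex.I ^ (n-1)
            = ((((n:ℝ) * Real.sqrt (Real.exp (y^2/(2*(n:ℝ))) - 1) / |y| - B : ℝ)) : ℂ)
              * Complex.I ^ (n-1) by push_cast; ring]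
        rw [norm_mul, norm_pow, Complex.norm_I, one_pow, mul_one, Complex.norm_real,
          Real.norm_eq_abs]
        exact hb
      · have h1 : Filter.Tendsto (fun y : ℝ => B * y^2) (𝓝 0) (𝓝 (B * 0^2)) :=
          (Continuous.tendsto (by continuity) 0)
        simpa using h1.mono_left nhdsWithin_le_nhds
    have hLeq : L = (B:ℂ) * Complex.I ^ (n-1) := tendsto_nhds_unique hT1' hT2
    have hLnorm : ‖L‖ = B := by
      rw [hLeq, norm_mul, norm_pow, Complex.norm_I, one_pow, mul_one, Complex.norm_real,
        Real.norm_eq_abs, _root_.abs_of_nonneg (Real.sqrt_nonneg _)]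
    -- x-axis limit
    have hpath2 : Filter.Tendsto (fun x : ℝ => ((x, (0:ℝ)) : ℝ×ℝ)) (𝓝[>] 0)
        (𝓝 ((0:ℝ),(0:ℝ))) := by
      have h1 : Filter.Tendsto (fun x : ℝ => ((x, (0:ℝ)) : ℝ×ℝ)) (𝓝 0)
          (𝓝 ((0:ℝ),(0:ℝ))) := (Continuous.tendsto (continuous_id.prodMk continuous_const) 0)
      exact h1.mono_left nhdsWithin_le_nhds
    have hT3 : Filter.Tendsto (fun x : ℝ => fderiv ℝ (Wcoord n) (x,(0:ℝ)) ((1:ℝ),(0:ℝ)))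
        (𝓝[>] 0) (𝓝 L) := hΦ.tendsto.comp hpath2
    have hmem2 : ∀ᶠ x in 𝓝[>] (0:ℝ), ((x, (0:ℝ)) : ℝ×ℝ) ∈ v := hpath2.eventually_mem hvmem
    have hEv2 : ∀ᶠ x in 𝓝[>] (0:ℝ),
        ‖fderiv ℝ (Wcoord n) (x,(0:ℝ)) ((1:ℝ),(0:ℝ))‖ ≤ 3 / (2 * Real.sqrt (2*(n:ℝ))) := by
      filter_upwards [hmem2, hIoo] with x hxv hx01
      rw [hkey (x,(0:ℝ)) hxv _ (hasDerivAt_W_x n hn1 x hx01.1)]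
      have hnn : (0:ℝ) ≤ Real.exp ((x^2+(0:ℝ)^2)/(2*(n:ℝ))) * (x/(n:ℝ)) /
          (2 * Real.sqrt (Real.exp ((x^2+(0:ℝ)^2)/(2*(n:ℝ))) - 1)) := by
        apply div_nonneg
        · exact mul_nonneg (Real.exp_pos _).le (div_nonneg hx01.1.le hn0.le)
        · positivity
      rw [Complex.norm_real, Real.norm_eq_abs, _root_.abs_of_nonneg hnn]
      exact xaxis_bound n hn x hx01.1 hx01.2
    have hLle : ‖L‖ ≤ 3 / (2 * Real.sqrt (2*(n:ℝ))) := le_of_tendsto hT3.norm hEv2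
    have h2n : (0:ℝ) < Real.sqrt (2*(n:ℝ)) := Real.sqrt_pos.mpr (by linarith)
    have hBs : B * Real.sqrt (2*(n:ℝ)) = (n:ℝ) := by
      rw [hB, ← Real.sqrt_mul (by positivity), show ((n:ℝ)/2)*(2*(n:ℝ)) = (n:ℝ)^2 by ring,
        Real.sqrt_sq hn0.le]
    have hmul : 3 / (2 * Real.sqrt (2*(n:ℝ))) * Real.sqrt (2*(n:ℝ)) = 3/2 := by
      field_simp
    have hfin : (n:ℝ) ≤ 3/2 := by
      have h := mul_le_mul_of_nonneg_right hLle h2n.le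
      rw [hLnorm, hBs, hmul] at h
      exact h
    have h2 : (2:ℝ) ≤ (n:ℝ) := by exact_mod_cast hn
    linarith
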